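/- Suppose a sequence S of length N over alphabet [1..n] is split into a bitvector Z of length N marking the first occurrence of each symbol, a permutation π of [1..n] with π[i] equal to the rank (among marked positions) of the first occurrence of symbol i, and the subsequence S' of unmarked positions. Then S can be exactly reconstructed: S[p] = S'[rank₀(Z,p)] if Z[p] = 0, and S[p] = π⁻¹[rank₁(Z,p)] if Z[p] = 1. -/

import Mathlib

section
variable {n : ℕ}

/-- `q` is the first (leftmost) occurrence in `S` of the symbol `S[q]`
(0-based positions; `d` is a dummy default value). -/
def isFirst (S : List (Fin n)) (d : Fin n) (q : ℕ) : Prop := S.getD q d ∉ S.take q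

instance (S : List (Fin n)) (d : Fin n) (q : ℕ) : Decidable (isFirst S d q) := by
  unfold isFirst; infer_instance

/-- `rank₁(Z,p)`: number of marked (first-occurrence) positions `q ≤ p`. -/
def rank1 (S : List (Fin n)) (d : Fin n) (p : ℕ) : ℕ :=
  ((List.range (p + 1)).filter (fun q => decide (isFirst S d q))).length

/-- `rank₀(Z,p)`: number of unmarked positions `q ≤ p`. -/
def rank0 (S : List (Fin n)) (d : Fin n) (p : ℕ) : ℕ :=
  ((List.range (p + 1)).filter (fun q => decide (¬ isFirst S d q))).length

/-- `S'`: the subsequence of `S` at unmarked (non-first-occurrence) positions. -/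
def subseq (S : List (Fin n)) (d : Fin n) : List (Fin n) :=
  ((List.range S.length).filter (fun q => decide (¬ isFirst S d q))).map
    (fun q => S.getD q d)

/-- The permutation `π`: `π i` is the rank, among marked positions, of the first
occurrence of symbol `i` in `S`. -/
def perm (S : List (Fin n)) (d : Fin n) (i : Fin n) : ℕ :=
  rank1 S d (S.idxOf i)

lemma my_getD_append_cons {α : Type*} (A B : List α) (x d : α) :
    (A ++ x :: B).getD A.length d = x := by
  rw [List.getD_eq_getElem _ _ (by simp), List.getElem_append_right (le_refl _)]
  simp

lemma my_indexOf_le {α : Type*} [DecidableEq α] :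
    ∀ (l : List α) (a : α) (i : ℕ), i < l.length → l.getD i a = a → l.idxOf a ≤ i := by
  intro l
  induction l with
  | nil => simp
  | cons x xs ih =>
    intro a i hi hg
    cases i with
    | zero => simp_all [List.idxOf_cons]
    | succ j =>
      simp only [List.getD, List.getElem?_cons_succ] at hg
      by_cases hx : x = a
      · simp [hx, List.idxOf_cons]
      · rw [List.idxOf_cons_ne _ (by exact_mod_cast hx)]
        exact Nat.succ_le_succ (ih a j (by simpa using hi) hg)

lemma isFirst_indexOf (S : List (Fin n)) (d : Fin n) (a : Fin n) (ha : a ∈ S) :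
    isFirst S d (S.idxOf a) := by
  have hlt : S.idxOf a < S.length := List.idxOf_lt_length_iff.2 ha
  have hg : S.getD (S.idxOf a) d = a := by
    rw [List.getD_eq_getElem _ _ hlt, List.getElem_idxOf]
  rw [isFirst, hg]
  intro hmem
  obtain ⟨i, hi, hgi⟩ := List.mem_take_iff_getElem.1 hmem
  have hi' : i < S.length := lt_of_lt_of_le hi (min_le_right _ _)
  have : S.idxOf a ≤ i :=
    my_indexOf_le S a i hi' (by rw [List.getD_eq_getElem _ _ hi']; exact hgi)
  omega

lemma indexOf_of_isFirst (S : List (Fin n)) (d : Fin n) (p : ℕ) (hp : p < S.length)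
    (h : isFirst S d p) : S.idxOf (S.getD p d) = p := by
  set a := S.getD p d with hadef
  have hle : S.idxOf a ≤ p := my_indexOf_le S a p hp
    (by rw [List.getD_eq_getElem _ _ hp, hadef, List.getD_eq_getElem _ _ hp])
  rcases Nat.lt_or_ge (S.idxOf a) p with hlt | hge
  · exfalso
    apply h
    have hlt' : S.idxOf a < S.length := lt_trans hlt hp
    exact List.mem_take_iff_getElem.2 ⟨S.idxOf a, by omega, List.getElem_idxOf hlt'⟩
  · omega

lemma rank1_lt_rank1 (S : List (Fin n)) (d : Fin n) (q q' : ℕ) (h : q < q')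
    (h' : isFirst S d q') : rank1 S d q < rank1 S d q' := by
  have hsplit : List.range (q' + 1) =
      List.range (q + 1) ++ List.map (fun x => (q + 1) + x) (List.range (q' - q)) := by
    rw [← List.range_add]; congr 1; omega
  have key : rank1 S d q' = rank1 S d q +
      ((List.map (fun x => (q + 1) + x) (List.range (q' - q))).filter
        (fun r => decide (isFirst S d r))).length := by
    rw [rank1, rank1, hsplit, List.filter_append, List.length_append]
  have hmem : q' ∈ (List.map (fun x => (q + 1) + x) (List.range (q' - q))).filter
      (fun r => decide (isFirst S d r)) := by
    rw [List.mem_filter]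
    constructor
    · rw [List.mem_map]
      exact ⟨q' - q - 1, by rw [List.mem_range]; omega, by omega⟩
    · simpa using h'
  have := List.length_pos_iff.2 (List.ne_nil_of_mem hmem)
  omega

end

/-- A sequence `S` of length `N` over alphabet `[1..n]` (every symbol
occurring at least once) split into the bitvector `Z` of first occurrences, the
permutation `π` (rank among marked positions of each symbol's first occurrence),
and the subsequence `S'` of unmarked positions, can be exactly reconstructed:
`S[p] = S'[rank₀(Z,p)]` if `Z[p] = 0`, and `S[p] = π⁻¹[rank₁(Z,p)]` if `Z[p] = 1`
(the latter expressed by: `π i = rank₁(Z,p)` holds exactly for `i = S[p]`).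
Ranks are 1-based counts of positions `≤ p`, and `S'` is indexed 0-based. -/
theorem stmt_9 {n : ℕ} (hn : 0 < n) (S : List (Fin n)) (hall : ∀ a : Fin n, a ∈ S)
    (d : Fin n) (p : ℕ) (hp : p < S.length) :
    (¬ isFirst S d p → S.getD p d = (subseq S d).getD (rank0 S d p - 1) d) ∧
    (isFirst S d p → ∀ i : Fin n, perm S d i = rank1 S d p ↔ i = S.getD p d) := by
  constructor
  · intro hnf
    have hnpp : (fun q => decide (¬ isFirst S d q)) p = true := by simp [hnf]
    have hr0 : rank0 S d p =
        ((List.range p).filter (fun q => decide (¬ isFirst S d q))).length + 1 := by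
      rw [rank0, List.range_succ, List.filter_append, List.length_append]
      simp [hnf]
    have hsplit : List.range S.length =
        List.range p ++ List.map (fun x => p + x) (List.range (S.length - p)) := by
      rw [← List.range_add]; congr 1; omega
    have hcons : List.map (fun x => p + x) (List.range (S.length - p)) =
        p :: List.map (fun x => p + x) (List.map Nat.succ (List.range (S.length - p - 1))) := by
      have h1 : S.length - p = (S.length - p - 1) + 1 := by omega
      rw [h1, List.range_succ_eq_map, List.map_cons]
      simp
    have hfc : List.filter (fun q => decide (¬ isFirst S d q))
        (p :: List.map (fun x => p + x) (List.map Nat.succ (List.range (S.length - p - 1)))) =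
        p :: List.filter (fun q => decide (¬ isFirst S d q))
          (List.map (fun x => p + x) (List.map Nat.succ (List.range (S.length - p - 1)))) :=
      List.filter_cons_of_pos hnpp
    rw [hr0, Nat.add_sub_cancel, subseq, hsplit, List.filter_append, hcons,
      hfc, List.map_append, List.map_cons]
    have hlen : ((List.range p).filter (fun q => decide (¬ isFirst S d q))).length =
        (((List.range p).filter (fun q => decide (¬ isFirst S d q))).map
          (fun q => S.getD q d)).length := by simp
    rw [hlen, my_getD_append_cons]
  · intro hf i
    constructor
    · intro hpi
      have hfi : isFirst S d (S.idxOf i) := isFirst_indexOf S d i (hall i)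
      have heq : S.idxOf i = p := by
        rcases Nat.lt_trichotomy (S.idxOf i) p with h | h | h
        · have := rank1_lt_rank1 S d (S.idxOf i) p h hf; rw [perm] at hpi; omega
        · exact h
        · have := rank1_lt_rank1 S d p (S.idxOf i) h hfi; rw [perm] at hpi; omega
      subst heq
      rw [List.getD_eq_getElem _ _ hp, List.getElem_idxOf]
    · intro hi
      rw [perm, hi, indexOf_of_isFirst S d p hp hf]
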